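/- Let p ∈ (1, 2), n ∈ ℕ, and let (x_i, y_i)_{i=1}^n be any points in ℝ^d × ℝ. Then for all w, w₀ ∈ ℝ^d: (1/n) Σ_{i=1}^n [ℓ_p(⟨w, x_i⟩ − y_i) − ℓ_p(⟨w₀, x_i⟩ − y_i)] ≥ (1/(4p²)) · (1/n) Σ_{i=1}^n γ_p(|⟨w₀, x_i⟩ − y_i|, |⟨w − w₀, x_i⟩|) + ⟨(1/n) Σ_{i=1}^n ℓ_p'(⟨w₀, x_i⟩ − y_i) x_i, w − w₀⟩. -/

import Mathlib

open Finset

/-- The function `γ_p(t, x)` of Bubeck–Cohen–Lee–Li: for `t, x ∈ [0, ∞)`,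
`γ_p(t,x) = (p/2) t^{p−2} x²` if `x ≤ t` and `γ_p(t,x) = x^p − (1 − p/2) t^p` if `x > t`
(with `γ_p(0,0) = 0`, using the junk value `0^{p-2} = 0` of `Real.rpow`). -/
noncomputable def gammaP (p t x : ℝ) : ℝ :=
  if x ≤ t then p / 2 * t ^ (p - 2) * x ^ 2 else x ^ p - (1 - p / 2) * t ^ p

lemma grad_ineq {q a b : ℝ} (hq0 : 0 < q) (hq1 : q ≤ 1) (ha : 0 < a) (hb : 0 ≤ b) :
    q * a ^ (q - 1) * (a - b) ≤ a ^ q - b ^ q := by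
  have hs : (-1:ℝ) ≤ b / a - 1 := by
    have : 0 ≤ b / a := div_nonneg hb ha.le
    linarith
  have hB := rpow_one_add_le_one_add_mul_self hs hq0.le hq1
  have he : 1 + (b / a - 1) = b / a := by ring
  rw [he] at hB
  have hba : (b / a) ^ q = b ^ q / a ^ q := Real.div_rpow hb ha.le q
  rw [hba] at hB
  have haq : 0 < a ^ q := Real.rpow_pos_of_pos ha q
  have haq1 : a ^ (q - 1) = a ^ q / a := by
    rw [Real.rpow_sub ha, Real.rpow_one]
  have key : b ^ q * a ≤ a ^ q * a + q * a ^ q * b - q * a ^ q * a := by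
    have h2 := mul_le_mul_of_nonneg_left hB haq.le
    have h3 := mul_le_mul_of_nonneg_right h2 ha.le
    calc b ^ q * a = a ^ q * (b ^ q / a ^ q) * a := by field_simp
      _ ≤ a ^ q * (1 + q * (b / a - 1)) * a := h3
      _ = a ^ q * a + q * a ^ q * b - q * a ^ q * a := by field_simp; ring
  rw [haq1]
  have he2 : q * (a ^ q / a) * (a - b) = q * a ^ q * (a - b) / a := by ring
  rw [he2, div_le_iff₀ ha]
  nlinarith [key]

lemma subadd_ineq {q t u : ℝ} (hq0 : 0 < q) (hq1 : q ≤ 1) (ht : 0 ≤ t) (htu : t ≤ u) :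
    u ^ q ≤ (u - t) ^ q + t ^ q := by
  rcases eq_or_lt_of_le (ht.trans htu) with h | hu
  · have ht0 : t = 0 := le_antisymm (htu.trans h.symm.le) ht
    simp [← h, ht0, Real.zero_rpow hq0.ne']
  · have hx1 : (u - t) / u ≤ 1 := by
      rw [div_le_one hu]; linarith
    have hx0 : 0 ≤ (u - t) / u := div_nonneg (by linarith) hu.le
    have hy1 : t / u ≤ 1 := by rw [div_le_one hu]; linarith
    have hy0 : 0 ≤ t / u := div_nonneg ht hu.le
    have k1 : (u - t) / u ≤ ((u - t) / u) ^ q := by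
      have := Real.rpow_le_rpow_of_exponent_ge' hx0 hx1 hq0.le hq1
      rwa [Real.rpow_one] at this
    have k2 : t / u ≤ (t / u) ^ q := by
      have := Real.rpow_le_rpow_of_exponent_ge' hy0 hy1 hq0.le hq1
      rwa [Real.rpow_one] at this
    have huq : 0 ≤ u ^ q := (Real.rpow_pos_of_pos hu q).le
    calc u ^ q = u ^ q * ((u - t) / u + t / u) := by field_simp; ring
      _ ≤ u ^ q * (((u - t) / u) ^ q + (t / u) ^ q) := by
          apply mul_le_mul_of_nonneg_left (add_le_add k1 k2) huq
      _ = (u * ((u - t) / u)) ^ q + (u * (t / u)) ^ q := by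
          rw [mul_add, ← Real.mul_rpow hu.le hx0, ← Real.mul_rpow hu.le hy0]
      _ = (u - t) ^ q + t ^ q := by
          rw [mul_div_cancel₀ _ hu.ne', mul_div_cancel₀ _ hu.ne']

set_option maxHeartbeats 1600000 in
lemma key0 (p : ℝ) (hp1 : 1 < p) (hp2 : p < 2) {t : ℝ} (ht : 0 ≤ t) (δ : ℝ) :
    (p - 1) / (4 * p) * gammaP p t |δ| ≤ |t + δ| ^ p - t ^ p - p * t ^ (p - 1) * δ := by
  have hp0 : 0 < p := by linarith
  have hq0 : 0 < p - 1 := by linarith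
  set c := (p - 1) / (4 * p) with hc
  have hc0 : 0 ≤ c := by positivity
  have hcle1 : c ≤ (p - 1) / 2 := by
    rw [hc, div_le_div_iff₀ (by linarith) (by norm_num)]
    nlinarith
  have hcle2 : c ≤ p - 1 := by linarith
  have hcle3 : c ≤ 1 := by
    rw [hc, div_le_one (by linarith)]; linarith
  rcases ht.eq_or_lt with heq | ht0
  · -- t = 0
    subst heq
    rw [Real.zero_rpow hp0.ne']
    have h01 : (0:ℝ) ^ (p - 1) = 0 := Real.zero_rpow (by linarith)
    rw [h01]
    simp only [zero_add, gammaP, mul_zero, zero_mul, sub_zero]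
    by_cases hδ : |δ| ≤ (0:ℝ)
    · have : δ = 0 := abs_nonpos_iff.mp hδ
      subst this
      simp [Real.zero_rpow hp0.ne']
    · rw [if_neg hδ]
      rw [Real.zero_rpow hp0.ne']
      have h1 : 0 ≤ |δ| ^ p := Real.rpow_nonneg (abs_nonneg δ) p
      nlinarith
  · -- 0 < t
    have h4 : (1/2 : ℝ) ≤ 2 ^ (p - 2) := by
      calc (1/2 : ℝ) = 2 ^ (-1 : ℝ) := by rw [Real.rpow_neg_one]; norm_num
        _ ≤ 2 ^ (p - 2) := Real.rpow_le_rpow_of_exponent_le (by norm_num) (by linarith)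
    have htp2 : 0 ≤ t ^ (p - 2) := Real.rpow_nonneg ht _
    have htp1 : 0 ≤ t ^ (p - 1) := Real.rpow_nonneg ht _
    have e1 : t ^ (p - 1) * t = t ^ p := by
      rw [← Real.rpow_add_one ht0.ne' (p - 1)]
      congr 1
      ring
    have e2 : t ^ (p - 2) * t ^ 2 = t ^ p := by
      rw [← Real.rpow_natCast t 2, ← Real.rpow_add ht0]
      congr 1
      push_cast
      ring
    -- piece f1 on [0, t]
    have mono1 : MonotoneOn
        (fun z : ℝ => (t + z) ^ p - t ^ p - p * t ^ (p - 1) * z - c * (p / 2) * t ^ (p - 2) * z ^ 2)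
        (Set.Icc 0 t) := by
      have hd : ∀ z : ℝ, HasDerivAt
          (fun z : ℝ => (t + z) ^ p - t ^ p - p * t ^ (p - 1) * z - c * (p / 2) * t ^ (p - 2) * z ^ 2)
          (p * (t + z) ^ (p - 1) - p * t ^ (p - 1) - c * (p / 2) * t ^ (p - 2) * (2 * z)) z := by
        intro z
        have h1 : HasDerivAt (fun z : ℝ => t + z) 1 z := (hasDerivAt_id z).const_add t
        have h2 := h1.rpow_const (Or.inr hp1.le)
        have h3 : HasDerivAt (fun z : ℝ => p * t ^ (p - 1) * z) (p * t ^ (p - 1)) z := by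
          simpa using (hasDerivAt_id z).const_mul (p * t ^ (p - 1))
        have h4' : HasDerivAt (fun z : ℝ => z ^ 2) (2 * z) z := by
          simpa using hasDerivAt_pow 2 z
        have h5 := h4'.const_mul (c * (p / 2) * t ^ (p - 2))
        have := ((h2.sub_const (t ^ p)).sub h3).sub h5
        exact this.congr_deriv (by ring)
      apply monotoneOn_of_deriv_nonneg (convex_Icc 0 t)
      · exact fun z _ => (hd z).continuousAt.continuousWithinAt
      · exact fun z _ => (hd z).differentiableAt.differentiableWithinAt
      · intro z hz
        rw [interior_Icc] at hz
        rw [(hd z).deriv]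
        have hz0 : 0 < z := hz.1
        have htz : 0 < t + z := by linarith
        have hg := grad_ineq (q := p - 1) (by linarith) (by linarith) htz ht
        rw [show p - 1 - 1 = p - 2 by ring, show t + z - t = z by ring] at hg
        have h2 : (2 * t) ^ (p - 2) ≤ (t + z) ^ (p - 2) :=
          Real.rpow_le_rpow_of_nonpos htz (by linarith [hz.2]) (by linarith)
        have h3 : (2 * t) ^ (p - 2) = 2 ^ (p - 2) * t ^ (p - 2) :=
          Real.mul_rpow (by norm_num) ht
        have h5 : (1/2) * t ^ (p - 2) ≤ (t + z) ^ (p - 2) := by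
          calc (1/2) * t ^ (p - 2) ≤ 2 ^ (p - 2) * t ^ (p - 2) :=
                mul_le_mul_of_nonneg_right h4 htp2
            _ = (2 * t) ^ (p - 2) := h3.symm
            _ ≤ (t + z) ^ (p - 2) := h2
        have h6 : (p - 1) * ((1/2) * t ^ (p - 2)) * z ≤ (p - 1) * (t + z) ^ (p - 2) * z :=
          mul_le_mul_of_nonneg_right (mul_le_mul_of_nonneg_left h5 (by linarith)) hz0.le
        have key : (p - 1) / 2 * (t ^ (p - 2) * z) ≤ (t + z) ^ (p - 1) - t ^ (p - 1) := by
          linarith [hg, h6]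
        have h7 : c * (t ^ (p - 2) * z) ≤ (t + z) ^ (p - 1) - t ^ (p - 1) :=
          le_trans (mul_le_mul_of_nonneg_right hcle1 (mul_nonneg htp2 hz0.le)) key
        linarith [mul_le_mul_of_nonneg_left h7 hp0.le]
    -- piece f2 on [t, ∞)
    have mono2 : MonotoneOn
        (fun z : ℝ => (t + z) ^ p - t ^ p - p * t ^ (p - 1) * z - c * (z ^ p - (1 - p / 2) * t ^ p))
        (Set.Ici t) := by
      have hd : ∀ z : ℝ, HasDerivAt
          (fun z : ℝ => (t + z) ^ p - t ^ p - p * t ^ (p - 1) * z - c * (z ^ p - (1 - p / 2) * t ^ p))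
          (p * (t + z) ^ (p - 1) - p * t ^ (p - 1) - c * (p * z ^ (p - 1))) z := by
        intro z
        have h1 : HasDerivAt (fun z : ℝ => t + z) 1 z := (hasDerivAt_id z).const_add t
        have h2 := h1.rpow_const (Or.inr hp1.le)
        have h3 : HasDerivAt (fun z : ℝ => p * t ^ (p - 1) * z) (p * t ^ (p - 1)) z := by
          simpa using (hasDerivAt_id z).const_mul (p * t ^ (p - 1))
        have h5 := ((Real.hasDerivAt_rpow_const (x := z) (p := p)
          (Or.inr hp1.le)).sub_const ((1 - p / 2) * t ^ p)).const_mul c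
        have := ((h2.sub_const (t ^ p)).sub h3).sub h5
        exact this.congr_deriv (by ring)
      apply monotoneOn_of_deriv_nonneg (convex_Ici t)
      · exact fun z _ => (hd z).continuousAt.continuousWithinAt
      · exact fun z _ => (hd z).differentiableAt.differentiableWithinAt
      · intro z hz
        rw [interior_Ici] at hz
        rw [(hd z).deriv]
        have hz0 : 0 < z := lt_trans ht0 hz
        have htz : 0 < t + z := by linarith
        have hg := grad_ineq (q := p - 1) (by linarith) (by linarith) htz ht
        rw [show p - 1 - 1 = p - 2 by ring, show t + z - t = z by ring] at hg
        have h2 : (2 * z) ^ (p - 2) ≤ (t + z) ^ (p - 2) :=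
          Real.rpow_le_rpow_of_nonpos htz (by linarith [Set.mem_Ioi.mp hz]) (by linarith)
        have h3 : (2 * z) ^ (p - 2) = 2 ^ (p - 2) * z ^ (p - 2) :=
          Real.mul_rpow (by norm_num) hz0.le
        have hzp2 : 0 ≤ z ^ (p - 2) := Real.rpow_nonneg hz0.le _
        have h5 : (1/2) * z ^ (p - 2) ≤ (t + z) ^ (p - 2) := by
          calc (1/2) * z ^ (p - 2) ≤ 2 ^ (p - 2) * z ^ (p - 2) :=
                mul_le_mul_of_nonneg_right h4 hzp2
            _ = (2 * z) ^ (p - 2) := h3.symm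
            _ ≤ (t + z) ^ (p - 2) := h2
        have h6 : (p - 1) * ((1/2) * z ^ (p - 2)) * z ≤ (p - 1) * (t + z) ^ (p - 2) * z :=
          mul_le_mul_of_nonneg_right (mul_le_mul_of_nonneg_left h5 (by linarith)) hz0.le
        have hzz : z ^ (p - 1) = z ^ (p - 2) * z := by
          rw [show p - 1 = p - 2 + 1 by ring, Real.rpow_add_one hz0.ne']
        have key : (p - 1) / 2 * z ^ (p - 1) ≤ (t + z) ^ (p - 1) - t ^ (p - 1) := by
          rw [hzz]
          linarith [hg, h6]
        have h7 : c * z ^ (p - 1) ≤ (t + z) ^ (p - 1) - t ^ (p - 1) :=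
          le_trans (mul_le_mul_of_nonneg_right hcle1 (Real.rpow_nonneg hz0.le _)) key
        linarith [mul_le_mul_of_nonneg_left h7 hp0.le]
    -- piece g1 on [0, t]
    have mono3 : MonotoneOn
        (fun u : ℝ => (t - u) ^ p - t ^ p + p * t ^ (p - 1) * u - c * (p / 2) * t ^ (p - 2) * u ^ 2)
        (Set.Icc 0 t) := by
      have hd : ∀ u : ℝ, HasDerivAt
          (fun u : ℝ => (t - u) ^ p - t ^ p + p * t ^ (p - 1) * u - c * (p / 2) * t ^ (p - 2) * u ^ 2)
          (p * t ^ (p - 1) - p * (t - u) ^ (p - 1) - c * (p / 2) * t ^ (p - 2) * (2 * u)) u := by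
        intro u
        have h1 : HasDerivAt (fun u : ℝ => t - u) (-1) u := by
          simpa using (hasDerivAt_id u).const_sub t
        have h2 := h1.rpow_const (Or.inr hp1.le)
        have h3 : HasDerivAt (fun u : ℝ => p * t ^ (p - 1) * u) (p * t ^ (p - 1)) u := by
          simpa using (hasDerivAt_id u).const_mul (p * t ^ (p - 1))
        have h4' : HasDerivAt (fun u : ℝ => u ^ 2) (2 * u) u := by
          simpa using hasDerivAt_pow 2 u
        have h5 := h4'.const_mul (c * (p / 2) * t ^ (p - 2))
        have := ((h2.sub_const (t ^ p)).add h3).sub h5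
        exact this.congr_deriv (by ring)
      apply monotoneOn_of_deriv_nonneg (convex_Icc 0 t)
      · exact fun u _ => (hd u).continuousAt.continuousWithinAt
      · exact fun u _ => (hd u).differentiableAt.differentiableWithinAt
      · intro u hu
        rw [interior_Icc] at hu
        rw [(hd u).deriv]
        have hu0 : 0 < u := hu.1
        have hg := grad_ineq (q := p - 1) (by linarith) (by linarith) ht0
          (by linarith [hu.2] : (0:ℝ) ≤ t - u)
        rw [show p - 1 - 1 = p - 2 by ring, show t - (t - u) = u by ring] at hg
        have h7 : c * (t ^ (p - 2) * u) ≤ t ^ (p - 1) - (t - u) ^ (p - 1) := by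
          refine le_trans (mul_le_mul_of_nonneg_right hcle2 (mul_nonneg htp2 hu0.le)) ?_
          linarith [hg]
        linarith [mul_le_mul_of_nonneg_left h7 hp0.le]
    -- piece g2 on [t, ∞)
    have mono4 : MonotoneOn
        (fun u : ℝ => (u - t) ^ p - t ^ p + p * t ^ (p - 1) * u - c * (u ^ p - (1 - p / 2) * t ^ p))
        (Set.Ici t) := by
      have hd : ∀ u : ℝ, HasDerivAt
          (fun u : ℝ => (u - t) ^ p - t ^ p + p * t ^ (p - 1) * u - c * (u ^ p - (1 - p / 2) * t ^ p))
          (p * (u - t) ^ (p - 1) + p * t ^ (p - 1) - c * (p * u ^ (p - 1))) u := by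
        intro u
        have h1 : HasDerivAt (fun u : ℝ => u - t) 1 u := (hasDerivAt_id u).sub_const t
        have h2 := h1.rpow_const (Or.inr hp1.le)
        have h3 : HasDerivAt (fun u : ℝ => p * t ^ (p - 1) * u) (p * t ^ (p - 1)) u := by
          simpa using (hasDerivAt_id u).const_mul (p * t ^ (p - 1))
        have h5 := ((Real.hasDerivAt_rpow_const (x := u) (p := p)
          (Or.inr hp1.le)).sub_const ((1 - p / 2) * t ^ p)).const_mul c
        have := ((h2.sub_const (t ^ p)).add h3).sub h5
        exact this.congr_deriv (by ring)
      apply monotoneOn_of_deriv_nonneg (convex_Ici t)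
      · exact fun u _ => (hd u).continuousAt.continuousWithinAt
      · exact fun u _ => (hd u).differentiableAt.differentiableWithinAt
      · intro u hu
        rw [interior_Ici] at hu
        rw [(hd u).deriv]
        have hu0 : 0 < u := lt_trans ht0 hu
        have hsub := subadd_ineq (q := p - 1) (by linarith) (by linarith) ht (le_of_lt hu)
        have h7 : c * u ^ (p - 1) ≤ (u - t) ^ (p - 1) + t ^ (p - 1) := by
          refine le_trans ?_ hsub
          have := mul_le_mul_of_nonneg_right hcle3 (Real.rpow_nonneg hu0.le (p - 1))
          linarith
        linarith [mul_le_mul_of_nonneg_left h7 hp0.le]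
    -- nonnegativity of pieces
    have f1nonneg : ∀ z ∈ Set.Icc (0:ℝ) t,
        0 ≤ (t + z) ^ p - t ^ p - p * t ^ (p - 1) * z - c * (p / 2) * t ^ (p - 2) * z ^ 2 := by
      intro z hz
      have := mono1 (Set.left_mem_Icc.mpr ht) hz hz.1
      simpa using this
    have g1nonneg : ∀ z ∈ Set.Icc (0:ℝ) t,
        0 ≤ (t - z) ^ p - t ^ p + p * t ^ (p - 1) * z - c * (p / 2) * t ^ (p - 2) * z ^ 2 := by
      intro z hz
      have := mono3 (Set.left_mem_Icc.mpr ht) hz hz.1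
      simpa using this
    have e2' : c * (p / 2) * t ^ (p - 2) * t ^ 2 = c * (p / 2) * t ^ p := by
      rw [mul_assoc, e2]
    have e1' : p * t ^ (p - 1) * t = p * t ^ p := by
      rw [mul_assoc, e1]
    have hf2t : 0 ≤ (t + t) ^ p - t ^ p - p * t ^ (p - 1) * t - c * (t ^ p - (1 - p / 2) * t ^ p) := by
      have h0 := f1nonneg t ⟨ht, le_refl t⟩
      linarith [h0, e1', e2']
    have hg2t : 0 ≤ (t - t) ^ p - t ^ p + p * t ^ (p - 1) * t - c * (t ^ p - (1 - p / 2) * t ^ p) := by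
      have h0 := g1nonneg t ⟨ht, le_refl t⟩
      linarith [h0, e1', e2']
    -- case analysis on δ
    rcases le_or_gt 0 δ with hδ0 | hδ0
    · rw [abs_of_nonneg hδ0, abs_of_nonneg (by linarith : (0:ℝ) ≤ t + δ)]
      rcases le_or_gt δ t with hδt | hδt
      · simp only [gammaP, if_pos hδt]
        have := f1nonneg δ ⟨hδ0, hδt⟩
        linarith
      · simp only [gammaP, if_neg (not_le.mpr hδt)]
        have hmono := mono2 (Set.mem_Ici.mpr (le_refl t)) (Set.mem_Ici.mpr hδt.le) hδt.le
        simp only at hmono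
        linarith [hmono, hf2t]
    · rw [abs_of_neg hδ0]
      rcases le_or_gt (-δ) t with hδt | hδt
      · rw [abs_of_nonneg (by linarith : (0:ℝ) ≤ t + δ)]
        simp only [gammaP, if_pos hδt]
        have h0 := g1nonneg (-δ) ⟨by linarith, hδt⟩
        rw [show t - -δ = t + δ by ring] at h0
        linarith [h0]
      · rw [abs_of_neg (by linarith : t + δ < 0)]
        simp only [gammaP, if_neg (not_le.mpr hδt)]
        have hmono := mono4 (Set.mem_Ici.mpr (le_refl t)) (Set.mem_Ici.mpr hδt.le) hδt.le
        simp only at hmono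
        rw [show -(t + δ) = -δ - t by ring]
        linarith [hmono, hg2t]

lemma key1 (p : ℝ) (hp1 : 1 < p) (hp2 : p < 2) (a δ : ℝ) :
    1 / (4 * p ^ 2) * gammaP p |a| |δ| ≤
      |a + δ| ^ p / (p * (p - 1)) - |a| ^ p / (p * (p - 1)) -
        Real.sign a * |a| ^ (p - 1) / (p - 1) * δ := by
  have hp0 : 0 < p := by linarith
  have hq0 : 0 < p - 1 := by linarith
  have hmain : (p - 1) / (4 * p) * gammaP p |a| |δ| ≤
      |a + δ| ^ p - |a| ^ p - p * (Real.sign a * |a| ^ (p - 1)) * δ := by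
    rcases le_or_gt 0 a with ha | ha
    · have h := key0 p hp1 hp2 (abs_nonneg a) δ
      rw [abs_of_nonneg ha] at h
      rw [abs_of_nonneg ha]
      have hs : Real.sign a * a ^ (p - 1) = a ^ (p - 1) := by
        rcases ha.eq_or_lt with rfl | h0
        · simp [Real.sign_zero, Real.zero_rpow hq0.ne']
        · rw [Real.sign_of_pos h0]; ring
      rw [hs]
      exact h
    · have h := key0 p hp1 hp2 (t := -a) (by linarith) (-δ)
      rw [show -a + -δ = -(a + δ) by ring, abs_neg, abs_neg] at h
      rw [abs_of_neg ha, Real.sign_of_neg ha]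
      linarith [h]
  have hD : 0 < p * (p - 1) := by nlinarith
  have expand : |a + δ| ^ p / (p * (p - 1)) - |a| ^ p / (p * (p - 1)) -
        Real.sign a * |a| ^ (p - 1) / (p - 1) * δ
      = (|a + δ| ^ p - |a| ^ p - p * (Real.sign a * |a| ^ (p - 1)) * δ) / (p * (p - 1)) := by
    field_simp
  have expand2 : 1 / (4 * p ^ 2) * gammaP p |a| |δ|
      = ((p - 1) / (4 * p) * gammaP p |a| |δ|) / (p * (p - 1)) := by
    field_simp
  rw [expand, expand2]
  exact div_le_div_of_nonneg_right hmain hD.le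

lemma main_aux (p : ℝ) (hp1 : 1 < p) (hp2 : p < 2) {n : ℕ} (a dv : Fin n → ℝ) :
    (1 / n : ℝ) * ∑ i, (|a i + dv i| ^ p / (p * (p - 1)) - |a i| ^ p / (p * (p - 1))) ≥
      1 / (4 * p ^ 2) * ((1 / n : ℝ) * ∑ i, gammaP p |a i| |dv i|) +
      (1 / n : ℝ) * ∑ i, (Real.sign (a i) * |a i| ^ (p - 1) / (p - 1)) * dv i := by
  have hn : (0:ℝ) ≤ 1 / n := by positivity
  rw [ge_iff_le]
  have e : 1 / (4 * p ^ 2) * ((1 / n : ℝ) * ∑ i, gammaP p |a i| |dv i|) +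
      (1 / n : ℝ) * ∑ i, (Real.sign (a i) * |a i| ^ (p - 1) / (p - 1)) * dv i
      = (1 / n : ℝ) * ∑ i, (1 / (4 * p ^ 2) * gammaP p |a i| |dv i| +
          (Real.sign (a i) * |a i| ^ (p - 1) / (p - 1)) * dv i) := by
    rw [Finset.mul_sum, Finset.mul_sum, Finset.mul_sum, Finset.mul_sum, ← Finset.sum_add_distrib]
    apply Finset.sum_congr rfl
    intros
    ring
  rw [e]
  apply mul_le_mul_of_nonneg_left _ hn
  apply Finset.sum_le_sum
  intro i _
  have h := key1 p hp1 hp2 (a i) (dv i)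
  linarith

/-- pointwise lower bound on the excess empirical risk for `p ∈ (1, 2)`
(inequality `eq:lowerboundpleq2` of Lemma `lem:boundsleq2`). -/
theorem empirical_excess_risk_lower_bound_p_lt_two
    (p : ℝ) (hp1 : 1 < p) (hp2 : p < 2) {d n : ℕ}
    (x : Fin n → Fin d → ℝ) (y : Fin n → ℝ)
    (w w₀ : Fin d → ℝ) :
    (1 / n : ℝ) * ∑ i, (|∑ j, w j * x i j - y i| ^ p / (p * (p - 1)) -
        |∑ j, w₀ j * x i j - y i| ^ p / (p * (p - 1))) ≥
      (1 / (4 * p ^ 2)) *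
        ((1 / n : ℝ) * ∑ i, gammaP p |∑ j, w₀ j * x i j - y i|
          |∑ j, (w j - w₀ j) * x i j|) +
      ∑ j, ((1 / n : ℝ) * ∑ i, (Real.sign (∑ j', w₀ j' * x i j' - y i) *
          |∑ j', w₀ j' * x i j' - y i| ^ (p - 1) / (p - 1)) * x i j) * (w j - w₀ j) := by
  have hC : ∑ j, ((1 / n : ℝ) * ∑ i, (Real.sign (∑ j', w₀ j' * x i j' - y i) *
          |∑ j', w₀ j' * x i j' - y i| ^ (p - 1) / (p - 1)) * x i j) * (w j - w₀ j)
      = (1 / n : ℝ) * ∑ i, (Real.sign (∑ j', w₀ j' * x i j' - y i) *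
          |∑ j', w₀ j' * x i j' - y i| ^ (p - 1) / (p - 1)) * (∑ j, (w j - w₀ j) * x i j) := by
    calc ∑ j, ((1 / n : ℝ) * ∑ i, (Real.sign (∑ j', w₀ j' * x i j' - y i) *
          |∑ j', w₀ j' * x i j' - y i| ^ (p - 1) / (p - 1)) * x i j) * (w j - w₀ j)
        = (1 / n : ℝ) * ∑ j, ∑ i, (Real.sign (∑ j', w₀ j' * x i j' - y i) *
          |∑ j', w₀ j' * x i j' - y i| ^ (p - 1) / (p - 1)) * x i j * (w j - w₀ j) := by
          rw [Finset.mul_sum]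
          apply Finset.sum_congr rfl
          intro j _
          rw [mul_assoc, Finset.sum_mul]
      _ = (1 / n : ℝ) * ∑ i, ∑ j, (Real.sign (∑ j', w₀ j' * x i j' - y i) *
          |∑ j', w₀ j' * x i j' - y i| ^ (p - 1) / (p - 1)) * x i j * (w j - w₀ j) := by
          rw [Finset.sum_comm]
      _ = (1 / n : ℝ) * ∑ i, (Real.sign (∑ j', w₀ j' * x i j' - y i) *
          |∑ j', w₀ j' * x i j' - y i| ^ (p - 1) / (p - 1)) * (∑ j, (w j - w₀ j) * x i j) := by
          congr 1
          apply Finset.sum_congr rfl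
          intro i _
          rw [Finset.mul_sum]
          apply Finset.sum_congr rfl
          intros
          ring
  rw [hC]
  have hA : ∑ i, (|∑ j, w j * x i j - y i| ^ p / (p * (p - 1)) -
        |∑ j, w₀ j * x i j - y i| ^ p / (p * (p - 1)))
      = ∑ i, (|(∑ j, w₀ j * x i j - y i) + (∑ j, (w j - w₀ j) * x i j)| ^ p / (p * (p - 1)) -
        |∑ j, w₀ j * x i j - y i| ^ p / (p * (p - 1))) := by
    apply Finset.sum_congr rfl
    intro i _
    have e : (∑ j, w j * x i j) = (∑ j, w₀ j * x i j) + ∑ j, (w j - w₀ j) * x i j := by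
      rw [← Finset.sum_add_distrib]
      apply Finset.sum_congr rfl
      intros
      ring
    rw [e, add_sub_right_comm]
  rw [hA]
  exact main_aux p hp1 hp2 (fun i => ∑ j, w₀ j * x i j - y i)
    (fun i => ∑ j, (w j - w₀ j) * x i j)
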